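/- With the layer mapping g(ρ) = R + (ρ−R)/Ω(ρ) on [R, S), where Ω(ρ) = 1 − (ρ−R)ⁿ/(S−R)ⁿ and n ≥ 2 an integer, the interface is matched: g(R) = R, g'(R) = 1, and all derivatives g^{(j)}(R) vanish for 2 ≤ j ≤ n−1. -/

import Mathlib

open Filter Topology

private lemma aux_deriv_analytic {θ : ℝ → ℝ} {R : ℝ} (hθ : AnalyticAt ℝ θ R) :
    AnalyticAt ℝ (deriv θ) R := by
  have h1 : AnalyticAt ℝ (fun x => fderiv ℝ θ x (1:ℝ)) R :=
    ((ContinuousLinearMap.apply ℝ ℝ (1:ℝ)).analyticAt _).comp hθ.fderiv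
  have : (deriv θ) = fun x => fderiv ℝ θ x (1:ℝ) := rfl
  rw [this]; exact h1

/-- derivative of `(x-R)^k * θ x` near `R`, for analytic θ and `k ≥ 1`. -/
private lemma aux_deriv_pow_mul (R : ℝ) (k : ℕ) (hk : 1 ≤ k) (θ : ℝ → ℝ)
    (hθ : AnalyticAt ℝ θ R) :
    (deriv fun x => (x - R) ^ k * θ x) =ᶠ[𝓝 R]
      fun x => (x - R) ^ (k - 1) * ((k : ℝ) * θ x + (x - R) * deriv θ x) := by
  filter_upwards [hθ.eventually_analyticAt] with x hx
  have hd : HasDerivAt (fun x => (x - R) ^ k * θ x)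
      (((k : ℝ) * (x - R) ^ (k - 1) * 1) * θ x + (x - R) ^ k * deriv θ x) x := by
    exact (((hasDerivAt_id x).sub_const R).pow k).mul hx.differentiableAt.hasDerivAt
  rw [hd.deriv]
  obtain ⟨k', rfl⟩ : ∃ k', k = k' + 1 := ⟨k - 1, (Nat.succ_pred_eq_of_pos hk).symm⟩
  simp only [Nat.add_sub_cancel, pow_succ]
  ring

private lemma aux_vanish (R : ℝ) (m : ℕ) (g θ : ℝ → ℝ) (hθ : AnalyticAt ℝ θ R)
    (hfg : g =ᶠ[𝓝 R] fun x => x + (x - R) ^ m * θ x) :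
    ∀ j : ℕ, 1 ≤ j → j ≤ m →
      ∃ θ' : ℝ → ℝ, AnalyticAt ℝ θ' R ∧
        iteratedDeriv j g =ᶠ[𝓝 R]
          fun x => (if j = 1 then (1:ℝ) else 0) + (x - R) ^ (m - j) * θ' x := by
  intro j hj1
  induction j, hj1 using Nat.le_induction with
  | base =>
    intro hm
    refine ⟨fun x => (m : ℝ) * θ x + (x - R) * deriv θ x,
      ((analyticAt_const.mul hθ).add
        (((analyticAt_id).sub analyticAt_const).mul (aux_deriv_analytic hθ))), ?_⟩
    have h1 : iteratedDeriv 1 g = deriv g := by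
      rw [iteratedDeriv_succ, iteratedDeriv_zero]
    rw [h1]
    have h2 : deriv g =ᶠ[𝓝 R] deriv (fun x => x + (x - R) ^ m * θ x) := hfg.deriv
    refine h2.trans ?_
    have h3 := aux_deriv_pow_mul R m hm θ hθ
    filter_upwards [h3, hθ.eventually_analyticAt] with x hx hax
    have hd : HasDerivAt (fun x => x + (x - R) ^ m * θ x)
        (1 + deriv (fun x => (x - R) ^ m * θ x) x) x := by
      have hpm : DifferentiableAt ℝ (fun x => (x - R) ^ m * θ x) x :=
        (((differentiable_id.sub_const R).pow m) x).mul hax.differentiableAt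
      exact (hasDerivAt_id x).add hpm.hasDerivAt
    rw [hd.deriv, hx]
    simp
  | succ j hj ih =>
    intro hjm
    obtain ⟨θ', hθ', heq⟩ := ih (le_of_lt hjm)
    have hk : 1 ≤ m - j := Nat.le_sub_of_add_le (by omega)
    refine ⟨fun x => ((m - j : ℕ) : ℝ) * θ' x + (x - R) * deriv θ' x,
      ((analyticAt_const.mul hθ').add
        (((analyticAt_id).sub analyticAt_const).mul (aux_deriv_analytic hθ'))), ?_⟩
    rw [iteratedDeriv_succ]
    have h2 := heq.deriv
    refine h2.trans ?_
    have h3 := aux_deriv_pow_mul R (m - j) hk θ' hθ'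
    have hmj : m - (j + 1) = m - j - 1 := by omega
    filter_upwards [h3, hθ'.eventually_analyticAt] with x hx hax
    have hd : HasDerivAt
        (fun x => (if j = 1 then (1:ℝ) else 0) + (x - R) ^ (m - j) * θ' x)
        (deriv (fun x => (x - R) ^ (m - j) * θ' x) x) x := by
      have hpm : DifferentiableAt ℝ (fun x => (x - R) ^ (m - j) * θ' x) x :=
        (((differentiable_id.sub_const R).pow (m - j)) x).mul hax.differentiableAt
      simpa using hpm
    rw [hd.deriv, hx, hmj]
    have : (j + 1 = 1) = False := eq_false (by omega)
    simp only [this, if_false]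
    have hj0 : ¬ j = 0 := by omega
    simp [hj0]

/-- The null infinity layer mapping `g(ρ) = R + (ρ−R)/Ω(ρ)` with
`Ω(ρ) = 1 − ((ρ−R)/(S−R))ⁿ`, `n ≥ 2`, matches the interface:
`g(R) = R`, `g'(R) = 1`, `g⁽ʲ⁾(R) = 0` for `2 ≤ j ≤ n−1`, and `g → ∞` at `S⁻`. -/
theorem stmt_14 (R S : ℝ) (hRS : R < S) (n : ℕ) (hn : 2 ≤ n)
    (Ω g : ℝ → ℝ)
    (hΩ : ∀ ρ : ℝ, Ω ρ = 1 - ((ρ - R) / (S - R))^n)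
    (hg : ∀ ρ : ℝ, g ρ = R + (ρ - R) / Ω ρ) :
    g R = R ∧
    HasDerivAt g 1 R ∧
    (∀ j : ℕ, 2 ≤ j → j ≤ n - 1 → iteratedDeriv j g R = 0) ∧
    Filter.Tendsto g (nhdsWithin S (Set.Iio S)) Filter.atTop := by
  have hw : (0:ℝ) < S - R := sub_pos.mpr hRS
  have hw0 : S - R ≠ 0 := ne_of_gt hw
  have hn0 : n ≠ 0 := by omega
  have hΩR : Ω R = 1 := by
    rw [hΩ]; simp [zero_pow hn0]
  have hΩcont : Continuous Ω := by
    have : Ω = fun ρ => 1 - ((ρ - R) / (S - R))^n := funext hΩ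
    rw [this]; continuity
  -- part 1
  have hgR : g R = R := by rw [hg]; simp [hΩR]
  refine ⟨hgR, ?_, ?_, ?_⟩
  · -- derivative 1 at R
    have h1 : HasDerivAt (fun x => x - R) 1 R := (hasDerivAt_id R).sub_const R
    have hbase : HasDerivAt (fun x => (x - R) / (S - R)) (1 / (S - R)) R := h1.div_const _
    have hpow := hbase.pow n
    have hΩd : HasDerivAt Ω (-((n : ℝ) * ((R - R) / (S - R)) ^ (n - 1) * (1 / (S - R)))) R := by
      have : Ω = fun ρ => 1 - ((ρ - R) / (S - R))^n := funext hΩ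
      rw [this]
      exact hpow.const_sub 1
    have hdiv := h1.div hΩd (by rw [hΩR]; norm_num)
    have hfinal := hdiv.const_add R
    have hgfun : g = fun x => R + (x - R) / Ω x := funext hg
    rw [hgfun]
    refine hfinal.congr_deriv ?_
    rw [hΩR]
    simp
  · -- iterated derivatives vanish
    intro j hj2 hjn
    set ψ : ℝ → ℝ := fun x => ((S - R)^n - (x - R)^n)⁻¹ with hψdef
    have hψ : AnalyticAt ℝ ψ R := by
      apply AnalyticAt.inv
      · exact analyticAt_const.sub ((analyticAt_id.sub analyticAt_const).pow n)
      · simp only [sub_self, zero_pow hn0, sub_zero]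
        exact pow_ne_zero n hw0
    have hne : ∀ᶠ x in 𝓝 R, Ω x ≠ 0 :=
      hΩcont.continuousAt.eventually_ne (by rw [hΩR]; norm_num)
    have hfg : g =ᶠ[𝓝 R] fun x => x + (x - R) ^ (n + 1) * ψ x := by
      filter_upwards [hne] with x hx
      have hΩeq : Ω x = ((S - R)^n - (x - R)^n) / (S - R)^n := by
        rw [hΩ x, div_pow]
        field_simp
      have hB : (S - R)^n - (x - R)^n ≠ 0 := by
        intro h
        apply hx
        rw [hΩeq, h, zero_div]
      rw [hg x, hΩeq, hψdef]
      field_simp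
      ring
    obtain ⟨θ', hθ', heq⟩ := aux_vanish R (n + 1) g ψ hψ hfg j (by omega) (by omega)
    have := heq.self_of_nhds
    rw [this]
    have hj1 : (j = 1) = False := by simp; omega
    simp [hj1, zero_pow (show n + 1 - j ≠ 0 by omega), sub_self]
  · -- tendsto atTop at S⁻
    have hΩto : Tendsto Ω (𝓝[<] S) (𝓝[>] (0:ℝ)) := by
      rw [tendsto_nhdsWithin_iff]
      constructor
      · have : Ω S = 0 := by rw [hΩ]; field_simp; simp
        have := hΩcont.continuousAt (x := S)
        rw [ContinuousAt, ‹Ω S = 0›] at this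
        exact this.mono_left nhdsWithin_le_nhds
      · have hmem : Set.Ioo (2*R - S) S ∈ 𝓝[<] S := by
          apply Ioo_mem_nhdsLT_of_mem
          exact ⟨by linarith, le_refl S⟩
        filter_upwards [hmem] with x hx
        have habs : |(x - R) / (S - R)| < 1 := by
          rw [abs_div, abs_of_pos hw, div_lt_one hw, abs_lt]
          constructor <;> [linarith [hx.1]; linarith [hx.2]]
        have h1 : ((x - R) / (S - R))^n ≤ |((x - R) / (S - R))^n| := le_abs_self _
        have h2 : |((x - R) / (S - R))^n| < 1 := by
          rw [abs_pow]
          exact pow_lt_one₀ (abs_nonneg _) habs hn0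
        have : ((x - R) / (S - R))^n < 1 := lt_of_le_of_lt h1 h2
        rw [hΩ]
        simp only [Set.mem_Ioi]
        linarith
    have hinv : Tendsto (fun x => (Ω x)⁻¹) (𝓝[<] S) atTop :=
      tendsto_inv_nhdsGT_zero.comp hΩto
    have hnum : Tendsto (fun x : ℝ => x - R) (𝓝[<] S) (𝓝 (S - R)) :=
      ((continuous_id.sub continuous_const).continuousAt).tendsto.mono_left nhdsWithin_le_nhds
    have hmul : Tendsto (fun x => (x - R) * (Ω x)⁻¹) (𝓝[<] S) atTop :=
      hnum.pos_mul_atTop hw hinv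
    have hfin : Tendsto (fun x => R + (x - R) * (Ω x)⁻¹) (𝓝[<] S) atTop :=
      tendsto_atTop_add_const_left _ R hmul
    refine hfin.congr fun x => ?_
    rw [hg x, div_eq_mul_inv]
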